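/- If G is a 2-connected chordal graph, then md(G) = 1. -/

import Mathlib

open SimpleGraph

/-- An edge-coloring `Γ` is a monochromatic disconnection coloring (MD-coloring) of `G`
if every pair of distinct vertices is separated by a monochromatic edge-cut. -/
def IsMDColoring {V : Type*} (G : SimpleGraph V) (Γ : Sym2 V → ℕ) : Prop :=
  ∀ u v : V, u ≠ v → ∃ (c : ℕ) (F : Set (Sym2 V)), F ⊆ G.edgeSet ∧
    (∀ e ∈ F, Γ e = c) ∧ ¬ (G.deleteEdges F).Reachable u v

/-- The monochromatic disconnection number of `G`: the maximum number of colors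
used by an MD-coloring of `G`. -/
noncomputable def md {V : Type*} (G : SimpleGraph V) : ℕ :=
  sSup {n : ℕ | ∃ Γ : Sym2 V → ℕ, IsMDColoring G Γ ∧ (Γ '' G.edgeSet).ncard = n}

/-- A graph is chordal if every cycle of length at least 4 has a chord: an edge of the
graph between two vertices of the cycle that is not an edge of the cycle. -/
def IsChordal {V : Type*} (G : SimpleGraph V) : Prop :=
  ∀ (v : V) (w : G.Walk v v), w.IsCycle → 4 ≤ w.length →
    ∃ a b : V, a ∈ w.support ∧ b ∈ w.support ∧ G.Adj a b ∧ s(a, b) ∉ w.edges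

section Aux
variable {V : Type*} {G : SimpleGraph V} {Γ : Sym2 V → ℕ}

/-- In an MD-coloring, the two edges from `v` in a triangle `v u w` get equal colors. -/
lemma triangle_md (hΓ : IsMDColoring G Γ) {v u w : V} (hu : G.Adj v u) (hw : G.Adj v w)
    (huw : G.Adj u w) : Γ s(v,u) = Γ s(v,w) := by
  -- helper for one cut
  have cut : ∀ {x y z : V}, G.Adj x y → G.Adj x z → G.Adj y z →
      Γ s(x,y) = Γ s(y,z) ∨ Γ s(x,z) = Γ s(y,z) := by
    intro x y z hxy hxz hyz
    obtain ⟨c, F, hFs, hcol, hnr⟩ := hΓ y z hyz.ne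
    have h1 : s(y,z) ∈ F := by
      by_contra h
      exact hnr (SimpleGraph.Adj.reachable (by rw [SimpleGraph.deleteEdges_adj]; exact ⟨hyz, h⟩))
    have h2 : s(x,y) ∈ F ∨ s(x,z) ∈ F := by
      by_contra h
      push_neg at h
      have r1 : (G.deleteEdges F).Adj y x := by
        rw [SimpleGraph.deleteEdges_adj]
        refine ⟨hxy.symm, ?_⟩
        rw [Sym2.eq_swap]; exact h.1
      have r2 : (G.deleteEdges F).Adj x z := by
        rw [SimpleGraph.deleteEdges_adj]; exact ⟨hxz, h.2⟩
      exact hnr (r1.reachable.trans r2.reachable)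
    have e1 : Γ s(y,z) = c := hcol _ h1
    rcases h2 with h | h
    · exact Or.inl (by rw [hcol _ h, e1])
    · exact Or.inr (by rw [hcol _ h, e1])
  have A := cut hu hw huw
  have B := cut hu.symm huw hw
  have C := cut hw.symm huw.symm hu
  rw [Sym2.eq_swap (a := u) (b := v)] at B
  rw [Sym2.eq_swap (a := w) (b := v), Sym2.eq_swap (a := w) (b := u)] at C
  rw [Sym2.eq_swap (a := u) (b := w)] at B C
  omega

end Aux

section Split
variable {V : Type*} {G : SimpleGraph V}

lemma split3 {u w : V} (q : G.Walk u w) {a b : V} (ha : a ∈ q.support) (hb : b ∈ q.support) :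
    ∃ (c d : V), ((c = a ∧ d = b) ∨ (c = b ∧ d = a)) ∧
      ∃ (r1 : G.Walk u c) (r2 : G.Walk c d) (r3 : G.Walk d w),
        r1.length + r2.length + r3.length = q.length ∧
        r1.support ⊆ q.support ∧ r2.edges ⊆ q.edges ∧ r3.support ⊆ q.support := by
  classical
  have hsplit : (q.takeUntil a ha).length + (q.dropUntil a ha).length = q.length := by
    rw [← SimpleGraph.Walk.length_append, q.take_spec ha]
  by_cases hb' : b ∈ (q.dropUntil a ha).support
  · refine ⟨a, b, Or.inl ⟨rfl, rfl⟩, q.takeUntil a ha, (q.dropUntil a ha).takeUntil b hb',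
      (q.dropUntil a ha).dropUntil b hb', ?_, q.support_takeUntil_subset ha, ?_, ?_⟩
    · have h2 : ((q.dropUntil a ha).takeUntil b hb').length
          + ((q.dropUntil a ha).dropUntil b hb').length = (q.dropUntil a ha).length := by
        rw [← SimpleGraph.Walk.length_append, (q.dropUntil a ha).take_spec hb']
      omega
    · exact (List.Subset.trans ((q.dropUntil a ha).edges_takeUntil_subset hb') (q.edges_dropUntil_subset ha))
    · exact (List.Subset.trans ((q.dropUntil a ha).support_dropUntil_subset hb') (q.support_dropUntil_subset ha))
  · have hbt : b ∈ (q.takeUntil a ha).support := by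
      have := SimpleGraph.Walk.mem_support_append_iff (t := b) (q.takeUntil a ha) (q.dropUntil a ha)
      rw [q.take_spec ha] at this
      rcases this.mp hb with h | h
      · exact h
      · exact absurd h hb'
    refine ⟨b, a, Or.inr ⟨rfl, rfl⟩, (q.takeUntil a ha).takeUntil b hbt,
      (q.takeUntil a ha).dropUntil b hbt, q.dropUntil a ha, ?_, ?_, ?_,
      q.support_dropUntil_subset ha⟩
    · have h2 : ((q.takeUntil a ha).takeUntil b hbt).length
          + ((q.takeUntil a ha).dropUntil b hbt).length = (q.takeUntil a ha).length := by
        rw [← SimpleGraph.Walk.length_append, (q.takeUntil a ha).take_spec hbt]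
      omega
    · exact (List.Subset.trans ((q.takeUntil a ha).support_takeUntil_subset hbt) (q.support_takeUntil_subset ha))
    · exact (List.Subset.trans ((q.takeUntil a ha).edges_dropUntil_subset hbt) (q.edges_takeUntil_subset ha))

end Split

section Key
variable {V : Type*} {G : SimpleGraph V} {Γ : Sym2 V → ℕ}

lemma adj_of_length_eq_one {u w : V} {p : G.Walk u w} (h : p.length = 1) : G.Adj u w := by
  cases p with
  | nil => simp at h
  | cons h' p' =>
    have h0 : p'.length = 0 := by simpa using h
    have := SimpleGraph.Walk.eq_of_length_eq_zero h0
    subst this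
    exact h'

lemma edge_mem_of_length_eq_one {u w : V} {p : G.Walk u w} (h : p.length = 1) :
    s(u,w) ∈ p.edges := by
  cases p with
  | nil => simp at h
  | cons h' p' =>
    have h0 : p'.length = 0 := by simpa using h
    have := SimpleGraph.Walk.eq_of_length_eq_zero h0
    subst this
    simp

lemma key_md (hΓ : IsMDColoring G Γ) (hch : IsChordal G) (v : V) :
    ∀ n : ℕ, ∀ u w : V, G.Adj v u → G.Adj v w →
      ∀ p : G.Walk u w, p.length ≤ n → v ∉ p.support → Γ s(v,u) = Γ s(v,w) := by
  intro n
  induction n using Nat.strong_induction_on with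
  | _ n IH =>
  intro u w hu hw p hpn hpv
  by_cases huw : u = w
  · subst huw; rfl
  classical
  have hne : (Set.Nonempty {m | ∃ q : G.Walk u w, v ∉ q.support ∧ q.length = m}) :=
    ⟨p.length, p, hpv, rfl⟩
  obtain ⟨q0, hq0v, hq0len⟩ := Nat.sInf_mem hne
  have hqpath : q0.bypass.IsPath := q0.bypass_isPath
  set q := q0.bypass with hqdef
  have hqv : v ∉ q.support := fun h => hq0v (q0.support_bypass_subset h)
  have hmin : ∀ r : G.Walk u w, v ∉ r.support → q.length ≤ r.length := by
    intro r hr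
    exact le_trans (le_trans q0.length_bypass_le (le_of_eq hq0len)) (Nat.sInf_le ⟨r, hr, rfl⟩)
  have hqn : q.length ≤ n := le_trans (hmin p hpv) hpn
  have hq1 : 1 ≤ q.length := by
    rcases Nat.eq_zero_or_pos q.length with h | h
    · exact absurd (SimpleGraph.Walk.eq_of_length_eq_zero h) huw
    · exact h
  rcases eq_or_lt_of_le hq1 with hq1' | hq2
  · exact triangle_md hΓ hu hw (adj_of_length_eq_one hq1'.symm)
  -- main case: q.length ≥ 2
  set c : G.Walk v v := SimpleGraph.Walk.cons hu (q.append hw.symm.toWalk) with hcdef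
  have hcedges : c.edges = s(v,u) :: (q.edges ++ [s(w,v)]) := by
    simp [hcdef, SimpleGraph.Walk.edges_append, SimpleGraph.Adj.toWalk]
  have hcsupp : c.support = v :: (q.support ++ [v]) := by
    simp [hcdef, SimpleGraph.Walk.support_append, SimpleGraph.Adj.toWalk]
  have hnuv : s(v,u) ∉ q.edges := fun h => hqv (q.fst_mem_support_of_mem_edges h)
  have hnwv : s(w,v) ∉ q.edges := fun h => hqv (q.snd_mem_support_of_mem_edges h)
  have hneq : s(v,u) ≠ s(w,v) := by
    intro h
    rw [Sym2.eq_iff] at h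
    rcases h with ⟨h1, _⟩ | ⟨_, h2⟩
    · exact hw.ne h1
    · exact huw h2
  have hcyc : c.IsCycle := by
    refine ⟨⟨⟨?_⟩, by simp [hcdef]⟩, ?_⟩
    · rw [hcedges]
      refine List.nodup_cons.mpr ⟨?_, ?_⟩
      · intro h
        rcases List.mem_append.mp h with h | h
        · exact hnuv h
        · exact hneq (by simpa using h)
      · refine List.nodup_append'.mpr ⟨hqpath.isTrail.edges_nodup, List.nodup_singleton _, ?_⟩
        intro e he h'
        rw [List.mem_singleton] at h'
        subst h'
        exact hnwv he
    · rw [hcsupp]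
      simp only [List.tail_cons]
      refine List.nodup_append'.mpr ⟨hqpath.support_nodup, List.nodup_singleton _, ?_⟩
      intro x hx h'
      rw [List.mem_singleton] at h'
      subst h'
      exact hqv hx
  have hclen : 4 ≤ c.length := by
    have : c.length = q.length + 2 := by
      simp [hcdef, SimpleGraph.Walk.length_append, SimpleGraph.Adj.toWalk]
    omega
  obtain ⟨a, b, hasup, hbsup, hab, habe⟩ := hch v c hcyc hclen
  have hsup : ∀ x, x ∈ c.support → x = v ∨ x ∈ q.support := by
    intro x hx
    rw [hcsupp] at hx
    rcases List.mem_cons.mp hx with h | h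
    · exact Or.inl h
    · rcases List.mem_append.mp h with h | h
      · exact Or.inr h
      · exact Or.inl (List.mem_singleton.mp h)
  have hqe_sub : q.edges ⊆ c.edges := by
    rw [hcedges]; intro e he; simp [he]
  have chordv : ∀ b', ∀ hb' : b' ∈ q.support, G.Adj v b' → s(v,b') ∉ c.edges →
      Γ s(v,u) = Γ s(v,w) := by
    intro b' hb' hvb' hbe
    have hbu : b' ≠ u := by
      rintro rfl
      exact hbe (by rw [hcedges]; simp)
    have hbw : b' ≠ w := by
      rintro rfl
      refine hbe ?_
      rw [hcedges, Sym2.eq_swap]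
      simp
    have hlen : (q.takeUntil b' hb').length + (q.dropUntil b' hb').length = q.length := by
      rw [← SimpleGraph.Walk.length_append, q.take_spec hb']
    have h1 : 1 ≤ (q.takeUntil b' hb').length := by
      rcases Nat.eq_zero_or_pos (q.takeUntil b' hb').length with h | h
      · exact absurd (SimpleGraph.Walk.eq_of_length_eq_zero h).symm hbu
      · exact h
    have h2 : 1 ≤ (q.dropUntil b' hb').length := by
      rcases Nat.eq_zero_or_pos (q.dropUntil b' hb').length with h | h
      · exact absurd (SimpleGraph.Walk.eq_of_length_eq_zero h) hbw
      · exact h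
    have e1 := IH (q.takeUntil b' hb').length (by omega) u b' hu hvb'
      (q.takeUntil b' hb') le_rfl (fun h => hqv (q.support_takeUntil_subset hb' h))
    have e2 := IH (q.dropUntil b' hb').length (by omega) b' w hvb' hw
      (q.dropUntil b' hb') le_rfl (fun h => hqv (q.support_dropUntil_subset hb' h))
    exact e1.trans e2
  rcases hsup a hasup with rfl | hains
  · rcases hsup b hbsup with rfl | hbins
    · exact absurd rfl hab.ne
    · exact chordv b hbins hab habe
  rcases hsup b hbsup with rfl | hbins
  · exact chordv a hains hab.symm (by rw [Sym2.eq_swap]; exact habe)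
  exfalso
  obtain ⟨c', d', hcd, r1, r2, r3, hlen3, hs1, he2, hs3⟩ := split3 q hains hbins
  have hadj' : G.Adj c' d' := by
    rcases hcd with ⟨rfl, rfl⟩ | ⟨rfl, rfl⟩
    · exact hab
    · exact hab.symm
  have hc'q : c' ∈ q.support := by
    rcases hcd with ⟨rfl, rfl⟩ | ⟨rfl, rfl⟩
    · exact hains
    · exact hbins
  have hedge' : s(c', d') ∉ q.edges := by
    intro h
    apply habe
    rcases hcd with ⟨rfl, rfl⟩ | ⟨rfl, rfl⟩
    · exact hqe_sub h
    · rw [Sym2.eq_swap]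
      exact hqe_sub h
  have h2 : 2 ≤ r2.length := by
    rcases Nat.lt_or_ge r2.length 2 with h | h
    · interval_cases h' : r2.length
      · exact absurd (SimpleGraph.Walk.eq_of_length_eq_zero h') hadj'.ne
      · exact absurd (he2 (edge_mem_of_length_eq_one h')) hedge'
    · exact h
  have hnot : v ∉ (r1.append (SimpleGraph.Walk.cons hadj' r3)).support := by
    intro hvmem
    rw [SimpleGraph.Walk.mem_support_append_iff] at hvmem
    rcases hvmem with h | h
    · exact hqv (hs1 h)
    · rw [SimpleGraph.Walk.support_cons] at h
      rcases List.mem_cons.mp h with rfl | h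
      · exact hqv hc'q
      · exact hqv (hs3 h)
  have hfinal := hmin (r1.append (SimpleGraph.Walk.cons hadj' r3)) hnot
  rw [SimpleGraph.Walk.length_append, SimpleGraph.Walk.length_cons] at hfinal
  omega

end Key

section Final
variable {V : Type*} {G : SimpleGraph V} {Γ : Sym2 V → ℕ}

lemma same_at_vertex (hΓ : IsMDColoring G Γ) (hch : IsChordal G)
    (hcut : ∀ v : V, (G.induce ({v}ᶜ : Set V)).Connected)
    {v u w : V} (hu : G.Adj v u) (hw : G.Adj v w) : Γ s(v,u) = Γ s(v,w) := by
  have hu' : u ∈ ({v}ᶜ : Set V) := by simp [hu.ne']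
  have hw' : w ∈ ({v}ᶜ : Set V) := by simp [hw.ne']
  obtain ⟨W⟩ := (hcut v).preconnected ⟨u, hu'⟩ ⟨w, hw'⟩
  let f := SimpleGraph.Embedding.induce (G := G) ({v}ᶜ : Set V)
  let p : G.Walk u w := W.map f.toHom
  have hvp : v ∉ p.support := by
    show v ∉ (W.map f.toHom).support
    rw [SimpleGraph.Walk.support_map]
    intro h
    obtain ⟨x, hx, hxe⟩ := List.mem_map.mp h
    exact x.2 (by simp [← hxe]; rfl)
  exact key_md hΓ hch v p.length u w hu hw p le_rfl hvp

lemma all_edges_same (hΓ : IsMDColoring G Γ) (hch : IsChordal G) (hconn : G.Connected)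
    (hcut : ∀ v : V, (G.induce ({v}ᶜ : Set V)).Connected) :
    ∀ e ∈ G.edgeSet, ∀ f ∈ G.edgeSet, Γ e = Γ f := by
  have chain : ∀ {x y : V} (p : G.Walk x y) (a b : V), G.Adj a x → G.Adj b y →
      Γ s(a,x) = Γ s(b,y) := by
    intro x y p
    induction p with
    | nil =>
      intro a b ha hb
      have := same_at_vertex hΓ hch hcut ha.symm hb.symm
      rwa [Sym2.eq_swap, Sym2.eq_swap (a := _) (b := b)] at this
    | @cons x x' y h p ih =>
      intro a b ha hb
      have h1 : Γ s(a, x) = Γ s(x, x') := by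
        have := same_at_vertex hΓ hch hcut ha.symm h
        rwa [Sym2.eq_swap (a := x) (b := a)] at this
      rw [h1]
      exact ih x b h hb
  intro e he f hf
  induction e with
  | h a b =>
  induction f with
  | h c d =>
  rw [SimpleGraph.mem_edgeSet] at he hf
  obtain ⟨p⟩ := hconn.preconnected b c
  have := chain p a d he hf.symm
  rwa [Sym2.eq_swap (a := d) (b := c)] at this

end Final


theorem stmt_17 {V : Type*} [Fintype V] (G : SimpleGraph V)
    (hcard : 3 ≤ Fintype.card V) (hconn : G.Connected)
    (hcut : ∀ v : V, (G.induce ({v}ᶜ : Set V)).Connected)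
    (hchordal : IsChordal G) :
    md G = 1 := by
  classical
  -- the edge set is nonempty
  have hedge : G.edgeSet.Nonempty := by
    obtain ⟨a, b, hab⟩ := Fintype.exists_pair_of_one_lt_card (α := V) (by omega)
    obtain ⟨p⟩ := hconn.preconnected a b
    cases p with
    | nil => exact absurd rfl hab
    | cons h _ => exact ⟨_, G.mem_edgeSet.mpr h⟩
  have hbot : G.deleteEdges G.edgeSet = ⊥ := by
    ext x y
    simp [SimpleGraph.deleteEdges_adj]
  have h1mem : 1 ∈ {n : ℕ | ∃ Γ : Sym2 V → ℕ, IsMDColoring G Γ ∧ (Γ '' G.edgeSet).ncard = n} := by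
    refine ⟨fun _ => 0, ?_, ?_⟩
    · intro u v huv
      refine ⟨0, G.edgeSet, subset_rfl, fun _ _ => rfl, ?_⟩
      rw [hbot]
      rw [SimpleGraph.reachable_bot]
      exact huv
    · rw [hedge.image_const]
      exact Set.ncard_singleton _
  have hub : ∀ n ∈ {n : ℕ | ∃ Γ : Sym2 V → ℕ, IsMDColoring G Γ ∧ (Γ '' G.edgeSet).ncard = n},
      n ≤ 1 := by
    rintro n ⟨Γ, hΓ, rfl⟩
    have hss : (Γ '' G.edgeSet).Subsingleton := by
      rintro x ⟨e, he, rfl⟩ y ⟨f, hf, rfl⟩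
      exact all_edges_same hΓ hchordal hconn hcut e he f hf
    rcases hss.eq_empty_or_singleton with h | ⟨a, h⟩
    · rw [h]; simp
    · rw [h]; simp [Set.ncard_singleton]
  rw [md]
  exact le_antisymm (csSup_le ⟨1, h1mem⟩ hub) (le_csSup ⟨1, hub⟩ h1mem)
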